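/- For k ≥ 1 let γ_k denote the k×k antidiagonal permutation matrix, (γ_k)_{ij} = 1 iff i + j = k+1, and define ι(X,Y) := (γ_m Yᵀ γ_n, γ_n Xᵀ γ_m) for (X,Y) ∈ Mat_{m×n}(ℂ) × Mat_{n×m}(ℂ). Then ι is an involution; (X,Y) ∈ E if and only if ι(X,Y) ∈ E; and for every π ∈ S_{m,n} one has ι(E°_π) = E°_{γ_n π γ_m}, where γ_n π γ_m ∈ S_{m,n} denotes the map i ↦ n+1−π(m+1−i). Consequently ι maps E_π bijectively onto E_{γ_n π γ_m}. -/

import Mathlib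

open Matrix

/-- The ambient space `Mat(m,n,ℂ) × Mat(n,m,ℂ)`. -/
abbrev LUSpace (m n : ℕ) := Matrix (Fin m) (Fin n) ℂ × Matrix (Fin n) (Fin m) ℂ

/-- Lower triangular square matrix. -/
def LowerTri {k : ℕ} (M : Matrix (Fin k) (Fin k) ℂ) : Prop := ∀ i j : Fin k, i < j → M i j = 0

/-- Upper triangular square matrix. -/
def UpperTri {k : ℕ} (M : Matrix (Fin k) (Fin k) ℂ) : Prop := ∀ i j : Fin k, j < i → M i j = 0

/-- The lower-upper scheme `E`. -/
def LU (m n : ℕ) : Set (LUSpace m n) :=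
  { p | LowerTri (p.1 * p.2) ∧ UpperTri (p.2 * p.1) }

/-- The partial permutation matrix associated to `π ∈ S_{m,n}`. -/
def permMat {m n : ℕ} (π : Fin m ↪ Fin n) : Matrix (Fin m) (Fin n) ℂ :=
  fun i j => if π i = j then 1 else 0

/-- Invertible lower triangular m×m matrices. -/
def Bminus (m : ℕ) : Set (Matrix (Fin m) (Fin m) ℂ) := { b | IsUnit b ∧ LowerTri b }

/-- Invertible upper triangular n×n matrices. -/
def Bplus (n : ℕ) : Set (Matrix (Fin n) (Fin n) ℂ) := { c | IsUnit c ∧ UpperTri c }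

/-- Lower unitriangular m×m matrices. -/
def Nminus (m : ℕ) : Set (Matrix (Fin m) (Fin m) ℂ) := { b | LowerTri b ∧ ∀ i, b i i = 1 }

/-- Upper unitriangular n×n matrices. -/
def Nplus (n : ℕ) : Set (Matrix (Fin n) (Fin n) ℂ) := { c | UpperTri c ∧ ∀ j, c j j = 1 }

/-- `E°_π`. -/
def Eopen {m n : ℕ} (π : Fin m ↪ Fin n) : Set (LUSpace m n) :=
  { p | ∃ b ∈ Nminus m, ∃ c ∈ Nplus n, ∃ s t : Fin m → ℂ,
      (∀ i, s i * t i ≠ 0) ∧ (∀ i i' : Fin m, i ≠ i' → s i * t i ≠ s i' * t i') ∧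
      p.1 = b * (Matrix.diagonal s * permMat π) * c⁻¹ ∧
      p.2 = c * ((permMat π)ᵀ * Matrix.diagonal t) * b⁻¹ }

/-- Coordinates of a point of `LUSpace` as a function on the variable-index type. -/
def coordsOf {m n : ℕ} (p : LUSpace m n) : (Fin m × Fin n) ⊕ (Fin n × Fin m) → ℂ
  | .inl ij => p.1 ij.1 ij.2
  | .inr ji => p.2 ji.1 ji.2

/-- Zariski closure of a subset of `LUSpace m n`: the common zero set of all polynomials
vanishing identically on the subset. -/
def zclosure {m n : ℕ} (S : Set (LUSpace m n)) : Set (LUSpace m n) :=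
  { p | ∀ f : MvPolynomial ((Fin m × Fin n) ⊕ (Fin n × Fin m)) ℂ,
      (∀ q ∈ S, MvPolynomial.eval (coordsOf q) f = 0) → MvPolynomial.eval (coordsOf p) f = 0 }

/-- `E_π`, the Zariski closure of `E°_π`. -/
def Ecomp {m n : ℕ} (π : Fin m ↪ Fin n) : Set (LUSpace m n) := zclosure (Eopen π)

/-- Zariski closure in the matrix space `Mat(m,n,ℂ)`. -/
def mzclosure {m n : ℕ} (S : Set (Matrix (Fin m) (Fin n) ℂ)) : Set (Matrix (Fin m) (Fin n) ℂ) :=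
  { X | ∀ f : MvPolynomial (Fin m × Fin n) ℂ,
      (∀ Y ∈ S, MvPolynomial.eval (fun ij => Y ij.1 ij.2) f = 0) →
        MvPolynomial.eval (fun ij => X ij.1 ij.2) f = 0 }

/-- The antidiagonal permutation matrix `γ_k`. -/
noncomputable def gam (k : ℕ) : Matrix (Fin k) (Fin k) ℂ :=
  fun i j => if (i : ℕ) + (j : ℕ) = k - 1 then 1 else 0

/-- The involution `ι(X,Y) = (γ_m Yᵀ γ_n, γ_n Xᵀ γ_m)`. -/
noncomputable def iotaLU {m n : ℕ} (p : LUSpace m n) : LUSpace m n :=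
  (gam m * p.2ᵀ * gam n, gam n * p.1ᵀ * gam m)

/-- The element `γ_n π γ_m ∈ S_{m,n}`: `i ↦ n+1−π(m+1−i)` (in `Fin`-indexing, `i ↦ rev (π (rev i))`). -/
def revConj {m n : ℕ} (π : Fin m ↪ Fin n) : Fin m ↪ Fin n :=
  ⟨fun i => (π i.rev).rev, fun a b h =>
    Fin.rev_injective (π.injective (Fin.rev_injective h))⟩

/-- `ι` is an involution, preserves `E`, sends `E°_π` to `E°_{γ_n π γ_m}`, and maps `E_π`
bijectively onto `E_{γ_n π γ_m}`. -/
lemma gam_apply {k : ℕ} (i j : Fin k) : gam k i j = if j = i.rev then 1 else 0 := by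
  have : ((i : ℕ) + (j : ℕ) = k - 1) ↔ j = i.rev := by
    rw [Fin.ext_iff, Fin.val_rev]
    omega
  simp [gam, this]

lemma gam_apply' {k : ℕ} (i j : Fin k) : gam k i j = if i = j.rev then 1 else 0 := by
  rw [gam_apply]
  congr 1
  simp only [eq_iff_iff]
  constructor <;> intro h <;> simp [h, Fin.rev_rev]

lemma gam_mul_apply {k l : ℕ} (M : Matrix (Fin k) (Fin l) ℂ) (i : Fin k) (j : Fin l) :
    (gam k * M) i j = M i.rev j := by
  rw [mul_apply]
  rw [Finset.sum_eq_single i.rev]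
  · simp [gam_apply]
  · intro b _ hb; simp [gam_apply, hb]
  · simp

lemma mul_gam_apply {k l : ℕ} (M : Matrix (Fin l) (Fin k) ℂ) (i : Fin l) (j : Fin k) :
    (M * gam k) i j = M i j.rev := by
  rw [mul_apply]
  rw [Finset.sum_eq_single j.rev]
  · simp [gam_apply']
  · intro b _ hb; simp [gam_apply', hb]
  · simp

lemma gam_gam {k : ℕ} : gam k * gam k = 1 := by
  ext i j
  rw [gam_mul_apply, gam_apply]
  simp [Matrix.one_apply, eq_comm, Fin.rev_eq_iff]

lemma gam_transpose {k : ℕ} : (gam k)ᵀ = gam k := by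
  ext i j
  simp [transpose_apply, gam, Nat.add_comm]

lemma gam_inv {k : ℕ} : (gam k)⁻¹ = gam k := Matrix.inv_eq_right_inv gam_gam

lemma conj_apply {k l : ℕ} (M : Matrix (Fin k) (Fin l) ℂ) (i : Fin k) (j : Fin l) :
    (gam k * M * gam l) i j = M i.rev j.rev := by
  rw [mul_gam_apply, gam_mul_apply]

lemma lowerTri_conj {k : ℕ} {M : Matrix (Fin k) (Fin k) ℂ} (h : LowerTri M) :
    LowerTri (gam k * Mᵀ * gam k) := by
  intro i j hij
  rw [conj_apply, transpose_apply]
  exact h j.rev i.rev (by rwa [Fin.rev_lt_rev])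

lemma upperTri_conj {k : ℕ} {M : Matrix (Fin k) (Fin k) ℂ} (h : UpperTri M) :
    UpperTri (gam k * Mᵀ * gam k) := by
  intro i j hij
  rw [conj_apply, transpose_apply]
  exact h j.rev i.rev (by rwa [Fin.rev_lt_rev])

lemma gam_cancel {k l : ℕ} (M : Matrix (Fin k) (Fin l) ℂ) : gam k * (gam k * M) = M := by
  rw [← Matrix.mul_assoc, gam_gam, Matrix.one_mul]

lemma conj_conj {k l : ℕ} (M : Matrix (Fin k) (Fin l) ℂ) :
    gam k * (gam l * Mᵀ * gam k)ᵀ * gam l = M := by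
  simp only [Matrix.transpose_mul, Matrix.transpose_transpose, gam_transpose]
  have : gam k * (gam k * (M * gam l)) * gam l = M * (gam l * gam l) := by
    rw [gam_cancel, Matrix.mul_assoc]
  simp only [Matrix.mul_assoc] at this ⊢
  rw [this, gam_gam, Matrix.mul_one]

lemma lowerTri_blockTri {k : ℕ} {M : Matrix (Fin k) (Fin k) ℂ} (h : LowerTri M) :
    M.BlockTriangular OrderDual.toDual := fun i j hij => h i j hij

lemma upperTri_blockTri {k : ℕ} {M : Matrix (Fin k) (Fin k) ℂ} (h : UpperTri M) :
    M.BlockTriangular id := fun i j hij => h i j hij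

lemma lower_unitri_det {k : ℕ} {M : Matrix (Fin k) (Fin k) ℂ} (h : LowerTri M)
    (hd : ∀ i, M i i = 1) : M.det = 1 := by
  rw [Matrix.det_of_lowerTriangular M (lowerTri_blockTri h)]
  simp [hd]

lemma upper_unitri_det {k : ℕ} {M : Matrix (Fin k) (Fin k) ℂ} (h : UpperTri M)
    (hd : ∀ i, M i i = 1) : M.det = 1 := by
  rw [Matrix.det_of_upperTriangular (upperTri_blockTri h)]
  simp [hd]

lemma lower_unitri_isUnit {k : ℕ} {M : Matrix (Fin k) (Fin k) ℂ} (h : LowerTri M)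
    (hd : ∀ i, M i i = 1) : IsUnit M := by
  rw [Matrix.isUnit_iff_isUnit_det, lower_unitri_det h hd]; exact isUnit_one

lemma upper_unitri_isUnit {k : ℕ} {M : Matrix (Fin k) (Fin k) ℂ} (h : UpperTri M)
    (hd : ∀ i, M i i = 1) : IsUnit M := by
  rw [Matrix.isUnit_iff_isUnit_det, upper_unitri_det h hd]; exact isUnit_one

lemma lower_inv {k : ℕ} {M : Matrix (Fin k) (Fin k) ℂ} (h : LowerTri M)
    (hd : ∀ i, M i i = 1) : LowerTri M⁻¹ := by
  have : Invertible M := (lower_unitri_isUnit h hd).invertible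
  exact fun i j hij => Matrix.blockTriangular_inv_of_blockTriangular (lowerTri_blockTri h) hij

lemma upper_inv {k : ℕ} {M : Matrix (Fin k) (Fin k) ℂ} (h : UpperTri M)
    (hd : ∀ i, M i i = 1) : UpperTri M⁻¹ := by
  have : Invertible M := (upper_unitri_isUnit h hd).invertible
  exact fun i j hij => Matrix.blockTriangular_inv_of_blockTriangular (upperTri_blockTri h) hij

lemma lower_inv_diag {k : ℕ} {M : Matrix (Fin k) (Fin k) ℂ} (h : LowerTri M)
    (hd : ∀ i, M i i = 1) : ∀ i, M⁻¹ i i = 1 := by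
  intro i
  have hu := lower_unitri_isUnit h hd
  have h1 : (M * M⁻¹) i i = 1 := by
    rw [Matrix.mul_nonsing_inv M ((Matrix.isUnit_iff_isUnit_det M).mp hu)]; simp
  rw [mul_apply, Finset.sum_eq_single i] at h1
  · rwa [hd, one_mul] at h1
  · intro b _ hb
    rcases lt_or_gt_of_ne hb with hlt | hlt
    · rw [lower_inv h hd b i hlt, mul_zero]
    · rw [h i b hlt, zero_mul]
  · simp

lemma upper_inv_diag {k : ℕ} {M : Matrix (Fin k) (Fin k) ℂ} (h : UpperTri M)
    (hd : ∀ i, M i i = 1) : ∀ i, M⁻¹ i i = 1 := by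
  intro i
  have hu := upper_unitri_isUnit h hd
  have h1 : (M * M⁻¹) i i = 1 := by
    rw [Matrix.mul_nonsing_inv M ((Matrix.isUnit_iff_isUnit_det M).mp hu)]; simp
  rw [mul_apply, Finset.sum_eq_single i] at h1
  · rwa [hd, one_mul] at h1
  · intro b _ hb
    rcases lt_or_gt_of_ne hb with hlt | hlt
    · rw [h i b hlt, zero_mul]
    · rw [upper_inv h hd b i hlt, mul_zero]
  · simp

lemma revConj_revConj {m n : ℕ} (π : Fin m ↪ Fin n) : revConj (revConj π) = π := by
  ext i
  show (((π i.rev.rev).rev).rev : ℕ) = π i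
  simp [Fin.rev_rev]

lemma gam_diag_gam {k : ℕ} (t : Fin k → ℂ) :
    gam k * Matrix.diagonal t * gam k = Matrix.diagonal (t ∘ Fin.rev) := by
  ext i j
  rw [conj_apply]
  by_cases h : i = j
  · subst h; simp [Matrix.diagonal_apply_eq]
  · rw [Matrix.diagonal_apply_ne _ (fun hc => h (Fin.rev_injective hc)),
      Matrix.diagonal_apply_ne _ h]

lemma gam_perm_gam {m n : ℕ} (π : Fin m ↪ Fin n) :
    gam m * permMat π * gam n = permMat (revConj π) := by
  ext i j
  rw [conj_apply]
  simp only [permMat, show revConj π i = (π i.rev).rev from rfl]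
  congr 1
  simp only [eq_iff_iff]
  constructor
  · intro h; rw [h, Fin.rev_rev]
  · intro h; rw [← h, Fin.rev_rev]

lemma iota_Eopen_sub {m n : ℕ} (π : Fin m ↪ Fin n) {p : LUSpace m n} (hp : p ∈ Eopen π) :
    iotaLU p ∈ Eopen (revConj π) := by
  obtain ⟨b, hb, c, hc, s, t, hst, hdist, hX, hY⟩ := hp
  have hbu : IsUnit b.det := (Matrix.isUnit_iff_isUnit_det b).mp (lower_unitri_isUnit hb.1 hb.2)
  have hcu : IsUnit c.det := (Matrix.isUnit_iff_isUnit_det c).mp (upper_unitri_isUnit hc.1 hc.2)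
  have hbinv : b⁻¹ ∈ Nminus m := ⟨lower_inv hb.1 hb.2, lower_inv_diag hb.1 hb.2⟩
  have hcinv : c⁻¹ ∈ Nplus n := ⟨upper_inv hc.1 hc.2, upper_inv_diag hc.1 hc.2⟩
  refine ⟨gam m * b⁻¹ᵀ * gam m, ?_, gam n * c⁻¹ᵀ * gam n, ?_,
    t ∘ Fin.rev, s ∘ Fin.rev, ?_, ?_, ?_, ?_⟩
  · exact ⟨lowerTri_conj hbinv.1, fun i => by
      rw [conj_apply, transpose_apply]; exact hbinv.2 i.rev⟩
  · exact ⟨upperTri_conj hcinv.1, fun i => by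
      rw [conj_apply, transpose_apply]; exact hcinv.2 i.rev⟩
  · intro i
    simpa [mul_comm] using hst i.rev
  · intro i i' hii'
    have : i.rev ≠ i'.rev := fun hc => hii' (Fin.rev_injective hc)
    simpa [mul_comm] using hdist i.rev i'.rev this
  · -- first component
    have hcinv' : (gam n * c⁻¹ᵀ * gam n)⁻¹ = gam n * cᵀ * gam n := by
      apply Matrix.inv_eq_right_inv
      have : gam n * c⁻¹ᵀ * gam n * (gam n * cᵀ * gam n)
          = gam n * (c⁻¹ᵀ * (gam n * (gam n * (cᵀ * gam n)))) := by
        simp only [Matrix.mul_assoc]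
      rw [this, gam_cancel, ← Matrix.mul_assoc c⁻¹ᵀ, ← Matrix.transpose_mul,
        Matrix.mul_nonsing_inv c hcu, Matrix.transpose_one, Matrix.one_mul, gam_gam]
    show gam m * p.2ᵀ * gam n = _
    rw [hY, hcinv', ← gam_perm_gam, show Matrix.diagonal (t ∘ Fin.rev)
      = gam m * Matrix.diagonal t * gam m from (gam_diag_gam t).symm]
    simp only [Matrix.transpose_mul, Matrix.transpose_transpose, Matrix.diagonal_transpose,
      Matrix.mul_assoc, gam_cancel, gam_gam, Matrix.mul_one]
  · -- second component
    have hbinv' : (gam m * b⁻¹ᵀ * gam m)⁻¹ = gam m * bᵀ * gam m := by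
      apply Matrix.inv_eq_right_inv
      have : gam m * b⁻¹ᵀ * gam m * (gam m * bᵀ * gam m)
          = gam m * (b⁻¹ᵀ * (gam m * (gam m * (bᵀ * gam m)))) := by
        simp only [Matrix.mul_assoc]
      rw [this, gam_cancel, ← Matrix.mul_assoc b⁻¹ᵀ, ← Matrix.transpose_mul,
        Matrix.mul_nonsing_inv b hbu, Matrix.transpose_one, Matrix.one_mul, gam_gam]
    show gam n * p.1ᵀ * gam m = _
    rw [hX, hbinv', ← gam_perm_gam, show Matrix.diagonal (s ∘ Fin.rev)
      = gam m * Matrix.diagonal s * gam m from (gam_diag_gam s).symm]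
    simp only [Matrix.transpose_mul, Matrix.transpose_transpose, Matrix.diagonal_transpose,
      gam_transpose, Matrix.mul_assoc, gam_cancel, gam_gam, Matrix.mul_one]

lemma iota_invol {m n : ℕ} : Function.Involutive (iotaLU (m := m) (n := n)) := by
  intro p
  unfold iotaLU
  refine Prod.ext ?_ ?_ <;> simp only <;> rw [conj_conj]

lemma iota_fst_mul_snd {m n : ℕ} (p : LUSpace m n) :
    (iotaLU p).1 * (iotaLU p).2 = gam m * (p.1 * p.2)ᵀ * gam m := by
  unfold iotaLU
  simp only [Matrix.transpose_mul]
  have : gam m * p.2ᵀ * gam n * (gam n * p.1ᵀ * gam m)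
      = gam m * (p.2ᵀ * (gam n * (gam n * (p.1ᵀ * gam m)))) := by
    simp only [Matrix.mul_assoc]
  rw [this, gam_cancel]
  simp only [Matrix.mul_assoc]

lemma iota_snd_mul_fst {m n : ℕ} (p : LUSpace m n) :
    (iotaLU p).2 * (iotaLU p).1 = gam n * (p.2 * p.1)ᵀ * gam n := by
  unfold iotaLU
  simp only [Matrix.transpose_mul]
  have : gam n * p.1ᵀ * gam m * (gam m * p.2ᵀ * gam n)
      = gam n * (p.1ᵀ * (gam m * (gam m * (p.2ᵀ * gam n)))) := by
    simp only [Matrix.mul_assoc]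
  rw [this, gam_cancel]
  simp only [Matrix.mul_assoc]

lemma lowerTri_conj_iff {k : ℕ} {M : Matrix (Fin k) (Fin k) ℂ} :
    LowerTri (gam k * Mᵀ * gam k) ↔ LowerTri M := by
  refine ⟨fun h => ?_, lowerTri_conj⟩
  have := lowerTri_conj h
  rwa [conj_conj] at this

lemma upperTri_conj_iff {k : ℕ} {M : Matrix (Fin k) (Fin k) ℂ} :
    UpperTri (gam k * Mᵀ * gam k) ↔ UpperTri M := by
  refine ⟨fun h => ?_, upperTri_conj⟩
  have := upperTri_conj h
  rwa [conj_conj] at this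

lemma iota_LU {m n : ℕ} (p : LUSpace m n) : p ∈ LU m n ↔ iotaLU p ∈ LU m n := by
  unfold LU
  rw [Set.mem_setOf_eq, Set.mem_setOf_eq, iota_fst_mul_snd, iota_snd_mul_fst,
    lowerTri_conj_iff, upperTri_conj_iff]

def sig (m n : ℕ) : (Fin m × Fin n) ⊕ (Fin n × Fin m) → (Fin m × Fin n) ⊕ (Fin n × Fin m)
  | .inl ij => .inr (ij.2.rev, ij.1.rev)
  | .inr ji => .inl (ji.2.rev, ji.1.rev)

lemma coordsOf_iota {m n : ℕ} (p : LUSpace m n) :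
    coordsOf (iotaLU p) = coordsOf p ∘ sig m n := by
  funext x
  cases x with
  | inl ij =>
      show (iotaLU p).1 ij.1 ij.2 = p.2 ij.2.rev ij.1.rev
      show (gam m * p.2ᵀ * gam n) ij.1 ij.2 = _
      rw [conj_apply, transpose_apply]
  | inr ji =>
      show (iotaLU p).2 ji.1 ji.2 = p.1 ji.2.rev ji.1.rev
      show (gam n * p.1ᵀ * gam m) ji.1 ji.2 = _
      rw [conj_apply, transpose_apply]

lemma iota_zclosure {m n : ℕ} {S : Set (LUSpace m n)} {p : LUSpace m n}
    (hp : p ∈ zclosure S) : iotaLU p ∈ zclosure (iotaLU '' S) := by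
  intro f hf
  have key : ∀ q : LUSpace m n,
      MvPolynomial.eval (coordsOf q) (MvPolynomial.rename (sig m n) f)
        = MvPolynomial.eval (coordsOf (iotaLU q)) f := by
    intro q
    rw [MvPolynomial.eval_rename, coordsOf_iota]
  rw [← key]
  exact hp _ (fun q hq => by rw [key]; exact hf _ ⟨q, hq, rfl⟩)


theorem iota_involution (m n : ℕ) (hm : 1 ≤ m) (hmn : m ≤ n) :
    Function.Involutive (iotaLU (m := m) (n := n)) ∧
    (∀ p : LUSpace m n, p ∈ LU m n ↔ iotaLU p ∈ LU m n) ∧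
    (∀ π : Fin m ↪ Fin n, iotaLU '' Eopen π = Eopen (revConj π)) ∧
    (∀ π : Fin m ↪ Fin n, Set.BijOn iotaLU (Ecomp π) (Ecomp (revConj π))) := by
  have hinv : Function.Involutive (iotaLU (m := m) (n := n)) := iota_invol
  have himg : ∀ π : Fin m ↪ Fin n, iotaLU '' Eopen π = Eopen (revConj π) := by
    intro π
    apply Set.Subset.antisymm
    · rintro _ ⟨p, hp, rfl⟩
      exact iota_Eopen_sub π hp
    · intro q hq
      have h1 := iota_Eopen_sub (revConj π) hq
      rw [revConj_revConj] at h1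
      exact ⟨iotaLU q, h1, hinv q⟩
  refine ⟨hinv, iota_LU, himg, ?_⟩
  have hmaps : ∀ ρ : Fin m ↪ Fin n, Set.MapsTo iotaLU (Ecomp ρ) (Ecomp (revConj ρ)) := by
    intro ρ p hp
    have h1 := iota_zclosure hp
    show iotaLU p ∈ zclosure (Eopen (revConj ρ))
    rwa [himg ρ] at h1
  intro π
  refine ⟨hmaps π, fun a _ b _ h => hinv.injective h, ?_⟩
  intro q hq
  have h2 := hmaps (revConj π) hq
  rw [revConj_revConj] at h2
  exact ⟨iotaLU q, h2, hinv q⟩
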